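/- Theorem (tunnel-digging code length). For every rooted plane tree T with n(T) = n ≥ 2 nodes and l(T) = l leaves, the binary tunnel-digging code TD(T) has length exactly 3n − 2l − 3 bits. -/

import Mathlib

/-- A rooted plane tree: a root node together with a finite ordered list of
subtrees, the subtrees rooted at the children of the root. -/
inductive PTree : Type
  | node : List PTree → PTree

namespace PTree

/-- The subtrees rooted at the children of the root. -/
def children : PTree → List PTree
  | node ts => ts

mutual
/-- Number of nodes of a rooted plane tree. -/
def numNodes : PTree → ℕ
  | node ts => 1 + numNodesList ts
def numNodesList : List PTree → ℕ
  | [] => 0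
  | t :: ts => numNodes t + numNodesList ts
end

mutual
/-- Number of leaves (nodes with no children); a single-node tree has one leaf. -/
def numLeaves : PTree → ℕ
  | node [] => 1
  | node (t :: ts) => numLeaves t + numLeavesList ts
def numLeavesList : List PTree → ℕ
  | [] => 0
  | t :: ts => numLeaves t + numLeavesList ts
end

/-- Symbols of the ternary pit-climbing code: ↓, ↑, ⇑. -/
inductive PCSym : Type
  | down   -- ↓ : fall to the leftmost unexplored leaf
  | up     -- ↑ : climb to a never-before-visited node
  | upSeen -- ⇑ : climb to an already-visited node
deriving DecidableEq

mutual
/-- Ternary pit-climbing code TPC: empty for a single node; `TPC t ++ [↑]` for a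
single child subtree `t`; `TPC t₁ ++ [↑,↓] ++ TPC t₂ ++ [⇑,↓] ++ ⋯ ++ [⇑,↓] ++ TPC tₖ ++ [⇑]`
for children subtrees `t₁, …, tₖ`, `k ≥ 2`. -/
def TPC : PTree → List PCSym
  | node [] => []
  | node [t] => TPC t ++ [.up]
  | node (t₁ :: t₂ :: ts) => TPC t₁ ++ [.up, .down] ++ TPCRest (t₂ :: ts)
/-- TPC contribution of the second-onwards children subtrees. -/
def TPCRest : List PTree → List PCSym
  | [] => []
  | [t] => TPC t ++ [.upSeen]
  | t :: ts => TPC t ++ [.upSeen, .down] ++ TPCRest ts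
end

/-- Binary encoding of the pit-climbing symbols: ↓ ↦ 0, ⇑ ↦ 00, ↑ ↦ 1. -/
def pcBits : PCSym → List Bool
  | .down => [false]
  | .upSeen => [false, false]
  | .up => [true]

/-- Binary pit-climbing code PC. -/
def PC (T : PTree) : List Bool := (TPC T).flatMap pcBits

lemma numNodesList_append (a b : List PTree) :
    numNodesList (a ++ b) = numNodesList a + numNodesList b := by
  induction a with
  | nil => simp [numNodesList]
  | cons t ts ih => simp [numNodesList, ih]; ring

lemma numNodesList_children_flatten (l : List PTree) :
    numNodesList ((l.map children).flatten) + l.length = numNodesList l := by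
  induction l with
  | nil => simp [numNodesList]
  | cons t ts ih =>
      cases t with
      | node cs =>
        simp only [List.map_cons, List.flatten_cons, numNodesList_append,
          List.length_cons, numNodesList, children, numNodes]
        omega

/-- Breadth-first list of the sibling groups of a tree, starting from the list
`gs` of sibling groups at the current level: the groups of the current level
followed by the groups of children on the levels below, level by level and
left to right within each level. -/
def bfsGroups (gs : List (List PTree)) : List (List PTree) :=
  if h : gs.flatten.isEmpty then []
  else gs ++ bfsGroups (gs.flatten.map children)
termination_by numNodesList gs.flatten
decreasing_by
  have h1 := numNodesList_children_flatten gs.flatten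
  have h2 : gs.flatten.length ≠ 0 := by
    intro hh
    rw [List.length_eq_zero_iff] at hh
    exact h (List.isEmpty_iff.mpr hh)
  omega

/-- Symbols of the ternary tunnel-digging code: ←, →, ⇒. -/
inductive TDSym : Type
  | leaf   -- ← : a leaf node
  | inner  -- → : a node with at least one child
  | tunnel -- ⇒ : transition between consecutive non-sibling nodes
deriving DecidableEq

/-- The symbols written for one sibling group: ← for each leaf, → for each
node with at least one child. -/
def groupSyms (g : List PTree) : List TDSym :=
  g.map (fun t => if t.children.isEmpty then .leaf else .inner)

/-- Ternary tunnel-digging code TTD: the non-root nodes in breadth-first order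
(by increasing depth, left to right within each depth), ← for each leaf and →
for each internal node, with ⇒ inserted between every two consecutive
non-sibling nodes. -/
def TTD (T : PTree) : List TDSym :=
  List.intercalate [TDSym.tunnel]
    (((bfsGroups [T.children]).filter (fun g => ¬ g.isEmpty)).map groupSyms)

/-- Binary encoding of the tunnel-digging symbols: ⇒ ↦ 0, → ↦ 00, ← ↦ 1. -/
def tdBits : TDSym → List Bool
  | .tunnel => [false]
  | .inner => [false, false]
  | .leaf => [true]

/-- Binary tunnel-digging code TD. -/
def TD (T : PTree) : List Bool := (TTD T).flatMap tdBits

/-- TreeExplorer code TE: `0·PC(T)` if `l(T) < n(T)/2`, and `1·TD(T)` otherwise. -/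
def TE (T : PTree) : List Bool :=
  if 2 * numLeaves T < numNodes T then false :: PC T else true :: TD T

section TDLengthAux

lemma filterP_eq (gs : List (List PTree)) :
    gs.filter (fun g => ¬ g.isEmpty) = gs.filter (fun g => !g.isEmpty) := by
  apply List.filter_congr
  intro a _
  cases a <;> simp

/-- Bit length contributed by one sibling group's symbols. -/
def bitLen (g : List PTree) : ℕ := ((groupSyms g).flatMap tdBits).length

lemma bitLen_nil : bitLen [] = 0 := by simp [bitLen, groupSyms]

lemma bitLen_eq (g : List PTree) :
    bitLen g = g.length + (g.filter (fun t => !t.children.isEmpty)).length := by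
  induction g with
  | nil => simp [bitLen, groupSyms]
  | cons t ts ih =>
    by_cases h : t.children.isEmpty <;>
      simp [bitLen, groupSyms, tdBits, h, List.filter_cons, List.flatMap_cons] at ih ⊢ <;>
      simp_all <;>
      omega

lemma numLeavesList_append (a b : List PTree) :
    numLeavesList (a ++ b) = numLeavesList a + numLeavesList b := by
  induction a with
  | nil => simp [numLeavesList]
  | cons t ts ih => simp [numLeavesList, ih]; ring

lemma numLeavesList_children_flatten (F : List PTree) :
    numLeavesList F
      = (F.filter (fun t => t.children.isEmpty)).length
        + numLeavesList ((F.map children).flatten) := by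
  induction F with
  | nil => simp [numLeavesList]
  | cons t ts ih =>
    cases t with
    | node cs =>
      cases cs with
      | nil =>
        simp [numLeavesList, numLeaves, children, List.filter_cons, ih,
          numLeavesList_append]
        omega
      | cons c cs =>
        simp [numLeavesList, numLeaves, children, List.filter_cons, ih,
          numLeavesList_append]
        omega

lemma filter_split (F : List PTree) :
    (F.filter (fun t => t.children.isEmpty)).length
      + (F.filter (fun t => !t.children.isEmpty)).length = F.length := by
  induction F with
  | nil => simp
  | cons t ts ih =>
    by_cases h : t.children.isEmpty <;> simp [List.filter_cons, h] <;> omega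

lemma filter_map_children (F : List PTree) :
    ((F.map children).filter (fun g => !g.isEmpty)).length
      = (F.filter (fun t => !t.children.isEmpty)).length := by
  induction F with
  | nil => simp
  | cons t ts ih =>
    by_cases h : t.children.isEmpty <;> simp [List.filter_cons, h, ih]

lemma sum_bitLen_filter (gs : List (List PTree)) :
    ((gs.filter (fun g => !g.isEmpty)).map bitLen).sum = (gs.map bitLen).sum := by
  induction gs with
  | nil => simp
  | cons g gs ih =>
    by_cases h : g.isEmpty
    · have : g = [] := List.isEmpty_iff.mp h
      subst this
      simp [List.filter_cons, ih, bitLen_nil]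
    · simp [List.filter_cons, h, ih]

lemma sum_bitLen (gs : List (List PTree)) :
    (gs.map bitLen).sum
      = gs.flatten.length + (gs.flatten.filter (fun t => !t.children.isEmpty)).length := by
  induction gs with
  | nil => simp
  | cons g gs ih => simp [bitLen_eq, ih, List.filter_append]; omega

lemma flatten_empty_filter (gs : List (List PTree)) (h : gs.flatten.isEmpty) :
    gs.filter (fun g => !g.isEmpty) = [] := by
  rw [List.isEmpty_iff, List.flatten_eq_nil_iff] at h
  rw [List.filter_eq_nil_iff]
  intro a ha
  simp [h a ha]

lemma flatten_empty_nodes (gs : List (List PTree)) (h : gs.flatten.isEmpty) :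
    numNodesList gs.flatten = 0 ∧ numLeavesList gs.flatten = 0 := by
  rw [List.isEmpty_iff] at h
  rw [h]
  exact ⟨rfl, rfl⟩

lemma bits_sum (gs : List (List PTree)) :
    (((bfsGroups gs).filter (fun g => !g.isEmpty)).map bitLen).sum
      + numLeavesList gs.flatten = 2 * numNodesList gs.flatten := by
  induction gs using bfsGroups.induct with
  | case1 gs h =>
    obtain ⟨h1, h2⟩ := flatten_empty_nodes gs h
    rw [bfsGroups, dif_pos h]
    simp [h1, h2]
  | case2 gs h ih =>
    rw [bfsGroups, dif_neg h]
    rw [List.filter_append, List.map_append, List.sum_append]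
    rw [sum_bitLen_filter, sum_bitLen]
    have hN := numNodesList_children_flatten gs.flatten
    have hL := numLeavesList_children_flatten gs.flatten
    have hS := filter_split gs.flatten
    omega

lemma count_groups (gs : List (List PTree)) :
    ((bfsGroups gs).filter (fun g => !g.isEmpty)).length
      + numLeavesList gs.flatten
      = numNodesList gs.flatten + (gs.filter (fun g => !g.isEmpty)).length := by
  induction gs using bfsGroups.induct with
  | case1 gs h =>
    obtain ⟨h1, h2⟩ := flatten_empty_nodes gs h
    rw [bfsGroups, dif_pos h, flatten_empty_filter gs h]
    simp [h1, h2]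
  | case2 gs h ih =>
    rw [bfsGroups, dif_neg h]
    rw [List.filter_append, List.length_append]
    have hN := numNodesList_children_flatten gs.flatten
    have hL := numLeavesList_children_flatten gs.flatten
    have hS := filter_split gs.flatten
    have hM := filter_map_children gs.flatten
    omega

lemma intercalate_length (L : List (List TDSym)) (h : L ≠ []) :
    ((List.intercalate [TDSym.tunnel] L).flatMap tdBits).length + 1
      = (L.map (fun g => (g.flatMap tdBits).length)).sum + L.length := by
  induction L with
  | nil => simp at h
  | cons a r ih =>
    cases r with
    | nil => simp [List.intercalate]
    | cons b r =>
      have hstep : List.intercalate [TDSym.tunnel] (a :: b :: r)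
          = a ++ [TDSym.tunnel] ++ List.intercalate [TDSym.tunnel] (b :: r) := by
        simp [List.intercalate]
      rw [hstep]
      have := ih (by simp)
      simp only [List.flatMap_append, List.length_append, List.map_cons,
        List.sum_cons, List.length_cons] at *
      simp [tdBits] at *
      omega

end TDLengthAux

end PTree

open PTree in
/-- **Tunnel-digging code length.** For every rooted plane tree `T` with
`n ≥ 2` nodes and `l` leaves, the binary tunnel-digging code `TD(T)` has
length exactly `3n - 2l - 3` bits. -/
theorem tunnelDigging_length (T : PTree) (hn : 2 ≤ numNodes T) :
    (TD T).length = 3 * numNodes T - 2 * numLeaves T - 3 := by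
  obtain ⟨ts⟩ := T
  have hts : ts ≠ [] := by
    intro hnil
    subst hnil
    simp [numNodes, numNodesList] at hn
  have hflat : ([ts] : List (List PTree)).flatten = ts := by simp
  have hmain := bits_sum [ts]
  have hcount := count_groups [ts]
  rw [hflat] at hmain hcount
  have hE : (([ts] : List (List PTree)).filter (fun g => !g.isEmpty)).length = 1 := by
    simp [List.filter_cons, hts]
  rw [hE] at hcount
  have hne : ((bfsGroups [ts]).filter (fun g => !g.isEmpty)) ≠ [] := by
    rw [bfsGroups]
    have hne2 : ¬ ([ts] : List (List PTree)).flatten.isEmpty := by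
      simp [hts]
    rw [dif_neg hne2]
    simp [List.filter_cons, List.filter_append, hts]
  have hic := intercalate_length
    (((bfsGroups [ts]).filter (fun g => !g.isEmpty)).map groupSyms)
    (by simpa using hne)
  have hmap : ((((bfsGroups [ts]).filter (fun g => !g.isEmpty)).map groupSyms).map
      (fun g => (g.flatMap tdBits).length))
      = ((bfsGroups [ts]).filter (fun g => !g.isEmpty)).map bitLen := by
    rw [List.map_map]
    rfl
  rw [hmap, List.length_map] at hic
  have hTD : TD (node ts) = (List.intercalate [TDSym.tunnel]
      (((bfsGroups [(node ts).children]).filter (fun g => ¬ g.isEmpty)).map groupSyms)).flatMap tdBits := rfl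
  have hch : (node ts).children = ts := rfl
  rw [hch, filterP_eq] at hTD
  have hlen : (TD (node ts)).length + 1
      = (((bfsGroups [ts]).filter (fun g => !g.isEmpty)).map bitLen).sum
        + ((bfsGroups [ts]).filter (fun g => !g.isEmpty)).length := by
    rw [hTD]; exact hic
  have hnodes : numNodes (node ts) = 1 + numNodesList ts := rfl
  have hleaves : numLeaves (node ts) = numLeavesList ts := by
    cases ts with
    | nil => exact absurd rfl hts
    | cons c cs => simp [numLeaves, numLeavesList]
  rw [hnodes, hleaves]
  omega
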